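/- Let n ≥ 1 and m ≥ n−1 be integers, and let F denote the Fibonacci sequence normalised by F(1) = F(2) = 1, F(x+2) = F(x+1) + F(x). Then the number of finite sequences (i_1, j_1, i_2, j_2, …, j_{k−1}, i_k) of odd length 2k−1 (k ≥ 1), with every i_t an integer in {0, 1, …, n−1}, every j_t an integer in {1, …, m}, and satisfying i_t < j_t and j_t ≤ i_{t+1} for all 1 ≤ t ≤ k−1, equals F(2n). -/

import Mathlib

namespace Stmt10Aux

open Finset

/-- Gap lemma: a strictly monotone map between `Fin` types grows at least linearly. -/
lemma sm_gap {N M : ℕ} {f : Fin N → Fin M} (hf : StrictMono f) :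
    ∀ (d : ℕ) (a b : Fin N), (b : ℕ) = (a : ℕ) + d → (f a : ℕ) + d ≤ (f b : ℕ) := by
  intro d
  induction d with
  | zero =>
    intro a b h
    have hab : a = b := Fin.ext (by omega)
    subst hab; omega
  | succ d ih =>
    intro a b h
    have hb' : (a : ℕ) + d < N := by have := b.2; omega
    have h1 := ih a ⟨(a : ℕ) + d, hb'⟩ rfl
    have h2 : f ⟨(a : ℕ) + d, hb'⟩ < f b := hf (by rw [Fin.lt_def]; simp; omega)
    have h3 := Fin.lt_def.mp h2
    omega

/-- Strictly monotone maps `Fin a → Fin b` biject with `a`-element subsets of `Fin b`. -/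
def smFinsetEquiv (a b : ℕ) :
    {f : Fin a → Fin b // StrictMono f} ≃ {s : Finset (Fin b) // s.card = a} where
  toFun f := ⟨Finset.univ.map ⟨f.1, f.2.injective⟩, by simp⟩
  invFun s := ⟨⇑(s.1.orderEmbOfFin s.2), (s.1.orderEmbOfFin s.2).strictMono⟩
  left_inv f := by
    apply Subtype.ext
    exact (Finset.orderEmbOfFin_unique _ (fun i => by simp) f.2).symm
  right_inv s := by
    apply Subtype.ext
    have h := Finset.range_orderEmbOfFin s.1 s.2
    ext x
    simp only [Finset.mem_map, Finset.mem_univ, true_and, Function.Embedding.coeFn_mk]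
    constructor
    · rintro ⟨i, rfl⟩; exact Finset.orderEmbOfFin_mem _ _ _
    · intro hx
      have hx' : x ∈ Set.range (s.1.orderEmbOfFin s.2) := by
        rw [h]; exact Finset.mem_coe.mpr hx
      obtain ⟨i, hi⟩ := hx'
      exact ⟨i, hi⟩

variable (n m : ℕ)

/-- The chain data at a fixed `κ`. -/
abbrev A (κ : ℕ) := {q : (Fin (κ + 1) → ℕ) × (Fin κ → ℕ) //
  (∀ t, q.1 t < n) ∧ (∀ t, 1 ≤ q.2 t ∧ q.2 t ≤ m) ∧
  (∀ t : Fin κ, q.1 t.castSucc < q.2 t ∧ q.2 t ≤ q.1 t.succ)}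

/-- Strictly monotone maps at a fixed `κ`. -/
abbrev SM (κ : ℕ) := {f : Fin (2 * κ + 1) → Fin (n + κ) // StrictMono f}

/-- Interleaved encoding: `t = 2s ↦ i s + s`, `t = 2s+1 ↦ j s + s`. -/
def encVal (κ : ℕ) (i : Fin (κ + 1) → ℕ) (j : Fin κ → ℕ) (t : Fin (2 * κ + 1)) : ℕ :=
  if h : t.1 % 2 = 0 then i ⟨t.1 / 2, by have := t.2; omega⟩ + t.1 / 2
  else j ⟨t.1 / 2, by have := t.2; omega⟩ + t.1 / 2

lemma encVal_even (κ : ℕ) (i : Fin (κ + 1) → ℕ) (j : Fin κ → ℕ) (s : ℕ)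
    (hs : s < κ + 1) (ht : 2 * s < 2 * κ + 1) :
    encVal κ i j ⟨2 * s, ht⟩ = i ⟨s, hs⟩ + s := by
  have h2 : 2 * s % 2 = 0 := by omega
  have h3 : 2 * s / 2 = s := by omega
  simp only [encVal, dif_pos h2, h3]

lemma encVal_odd (κ : ℕ) (i : Fin (κ + 1) → ℕ) (j : Fin κ → ℕ) (s : ℕ)
    (hs : s < κ) (ht : 2 * s + 1 < 2 * κ + 1) :
    encVal κ i j ⟨2 * s + 1, ht⟩ = j ⟨s, hs⟩ + s := by
  have h2 : ¬((2 * s + 1) % 2 = 0) := by omega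
  have h3 : (2 * s + 1) / 2 = s := by omega
  simp only [encVal, dif_neg h2, h3]

lemma encVal_lt (κ : ℕ) (q : A n m κ) (t : Fin (2 * κ + 1)) :
    encVal κ q.1.1 q.1.2 t < n + κ := by
  have hi := q.2.1
  have hij := q.2.2.2
  rcases Nat.even_or_odd t.1 with ⟨s, hs⟩ | ⟨s, hs⟩
  · have hs1 : s < κ + 1 := by have := t.2; omega
    have ht : t = ⟨2 * s, by have := t.2; omega⟩ := Fin.ext (by simp; omega)
    rw [ht, encVal_even κ q.1.1 q.1.2 s hs1 (by omega)]
    have := hi ⟨s, hs1⟩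
    omega
  · have hs1 : s < κ := by have := t.2; omega
    have ht : t = ⟨2 * s + 1, by have := t.2; omega⟩ := Fin.ext (by simp; omega)
    rw [ht, encVal_odd κ q.1.1 q.1.2 s hs1 (by omega)]
    have h1 := (hij ⟨s, hs1⟩).2
    rw [Fin.succ_mk] at h1
    have h2 := hi ⟨s + 1, by omega⟩
    omega

lemma encVal_mono (κ : ℕ) (q : A n m κ) (u : Fin (2 * κ)) :
    encVal κ q.1.1 q.1.2 u.castSucc < encVal κ q.1.1 q.1.2 u.succ := by
  have hij := q.2.2.2
  have hu := u.2
  rcases Nat.even_or_odd u.1 with ⟨s, hs⟩ | ⟨s, hs⟩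
  · have hsk : s < κ := by omega
    have hsk1 : s < κ + 1 := by omega
    have hb0 : 2 * s < 2 * κ + 1 := by omega
    have hb1 : 2 * s + 1 < 2 * κ + 1 := by omega
    have h1 : (u.castSucc : Fin (2 * κ + 1)) = ⟨2 * s, hb0⟩ := Fin.ext (by simp; omega)
    have h2 : u.succ = ⟨2 * s + 1, hb1⟩ := Fin.ext (by simp; omega)
    have e1 := encVal_even κ q.1.1 q.1.2 s hsk1 hb0
    have e2 := encVal_odd κ q.1.1 q.1.2 s hsk hb1
    rw [h1, h2, e1, e2]
    have h3 := (hij ⟨s, hsk⟩).1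
    rw [Fin.castSucc_mk] at h3
    omega
  · have hsk : s + 1 < κ + 1 := by omega
    have hsk0 : s < κ := by omega
    have hb0 : 2 * s + 1 < 2 * κ + 1 := by omega
    have hb1 : 2 * (s + 1) < 2 * κ + 1 := by omega
    have h1 : (u.castSucc : Fin (2 * κ + 1)) = ⟨2 * s + 1, hb0⟩ := Fin.ext (by simp; omega)
    have h2 : u.succ = ⟨2 * (s + 1), hb1⟩ := Fin.ext (by simp; omega)
    have e1 := encVal_odd κ q.1.1 q.1.2 s hsk0 hb0
    have e2 := encVal_even κ q.1.1 q.1.2 (s + 1) hsk hb1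
    rw [h1, h2, e1, e2]
    have h3 := (hij ⟨s, hsk0⟩).2
    rw [Fin.succ_mk] at h3
    omega

/-- The forward map from chain data to strictly monotone maps. -/
def toSM (κ : ℕ) (q : A n m κ) : SM n κ :=
  ⟨fun t => ⟨encVal κ q.1.1 q.1.2 t, encVal_lt n m κ q t⟩,
    Fin.strictMono_iff_lt_succ.mpr fun u => Fin.mk_lt_mk.mpr (encVal_mono n m κ q u)⟩

lemma toSM_inj (κ : ℕ) : Function.Injective (toSM n m κ) := by
  rintro ⟨⟨i, j⟩, h⟩ ⟨⟨i', j'⟩, h'⟩ heq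
  have heq' : ∀ t, encVal κ i j t = encVal κ i' j' t := by
    intro t
    have := congrFun (congrArg Subtype.val heq) t
    exact congrArg Fin.val this
  apply Subtype.ext
  simp only [Prod.mk.injEq]
  constructor
  · funext s
    have h2 := heq' ⟨2 * s.1, by have := s.2; omega⟩
    rw [encVal_even κ i j s.1 s.2 (by have := s.2; omega), encVal_even κ i' j' s.1 s.2 (by have := s.2; omega)] at h2
    have h3 : i ⟨s.1, s.2⟩ = i' ⟨s.1, s.2⟩ := by omega
    simpa using h3
  · funext s
    have h2 := heq' ⟨2 * s.1 + 1, by have := s.2; omega⟩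
    rw [encVal_odd κ i j s.1 s.2 (by have := s.2; omega), encVal_odd κ i' j' s.1 s.2 (by have := s.2; omega)] at h2
    have h3 : j ⟨s.1, s.2⟩ = j' ⟨s.1, s.2⟩ := by omega
    simpa using h3

lemma toSM_surj (hn : 1 ≤ n) (hm : n - 1 ≤ m) (κ : ℕ) :
    Function.Surjective (toSM n m κ) := by
  rintro ⟨f, hf⟩
  set g : ℕ → ℕ := fun x => if h : x < 2 * κ + 1 then (f ⟨x, h⟩ : ℕ) else x + n + κ with hgdef
  have hg : ∀ (x : ℕ) (h : x < 2 * κ + 1), g x = (f ⟨x, h⟩ : ℕ) := fun x h => dif_pos h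
  have hgmono : ∀ x y : ℕ, x < y → y < 2 * κ + 1 → g x < g y := by
    intro x y hxy hy
    rw [hg x (by omega), hg y hy]
    exact Fin.lt_def.mp (hf (Fin.mk_lt_mk.mpr hxy))
  have hge : ∀ x : ℕ, ∀ h : x < 2 * κ + 1, x ≤ g x := by
    intro x hx
    rw [hg x hx]
    have h1 := sm_gap hf x ⟨0, by omega⟩ ⟨x, hx⟩ (by simp)
    omega
  have hbig : 2 * κ < 2 * κ + 1 := by omega
  have hend : ∀ x : ℕ, ∀ h : x < 2 * κ + 1, g x + (2 * κ - x) ≤ n + κ - 1 := by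
    intro x hx
    rw [hg x hx]
    have h1 := sm_gap hf (2 * κ - x) ⟨x, hx⟩ ⟨2 * κ, hbig⟩ (by simp; omega)
    have h2 := (f ⟨2 * κ, hbig⟩).2
    omega
  refine ⟨⟨⟨fun s => g (2 * s.1) - s.1, fun s => g (2 * s.1 + 1) - s.1⟩, ?_, ?_, ?_⟩, ?_⟩
  · intro t
    show g (2 * t.1) - t.1 < n
    have ht := t.2
    have a1 := hge (2 * t.1) (by omega)
    have a2 := hend (2 * t.1) (by omega)
    omega
  · intro t
    have ht := t.2
    have a1 := hge (2 * t.1 + 1) (by omega)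
    have a2 := hend (2 * t.1 + 1) (by omega)
    constructor
    · show 1 ≤ g (2 * t.1 + 1) - t.1
      omega
    · show g (2 * t.1 + 1) - t.1 ≤ m
      omega
  · intro t
    have ht := t.2
    constructor
    · show g (2 * (t.castSucc).1) - (t.castSucc).1 < g (2 * t.1 + 1) - t.1
      simp only [Fin.coe_castSucc]
      have a1 := hge (2 * t.1) (by omega)
      have a3 := hgmono (2 * t.1) (2 * t.1 + 1) (by omega) (by omega)
      omega
    · show g (2 * t.1 + 1) - t.1 ≤ g (2 * (t.succ).1) - (t.succ).1
      simp only [Fin.val_succ]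
      have a1 := hge (2 * t.1 + 1) (by omega)
      have a3 := hgmono (2 * t.1 + 1) (2 * (t.1 + 1)) (by omega) (by omega)
      omega
  · apply Subtype.ext
    funext t
    apply Fin.ext
    show encVal κ (fun s => g (2 * s.1) - s.1) (fun s => g (2 * s.1 + 1) - s.1) t = (f t : ℕ)
    have htv := t.2
    rcases Nat.even_or_odd t.1 with ⟨s, hs⟩ | ⟨s, hs⟩
    · have hsk1 : s < κ + 1 := by omega
      have hb0 : 2 * s < 2 * κ + 1 := by omega
      have ht : t = ⟨2 * s, hb0⟩ := Fin.ext (by simp; omega)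
      rw [ht, encVal_even κ _ _ s hsk1 hb0]
      show g (2 * s) - s + s = (f ⟨2 * s, hb0⟩ : ℕ)
      have e := hg (2 * s) hb0
      have a1 := hge (2 * s) hb0
      omega
    · have hsk0 : s < κ := by omega
      have hb1 : 2 * s + 1 < 2 * κ + 1 := by omega
      have ht : t = ⟨2 * s + 1, hb1⟩ := Fin.ext (by simp; omega)
      rw [ht, encVal_odd κ _ _ s hsk0 hb1]
      show g (2 * s + 1) - s + s = (f ⟨2 * s + 1, hb1⟩ : ℕ)
      have e := hg (2 * s + 1) hb1
      have a1 := hge (2 * s + 1) hb1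
      omega

/-- The equivalence between chain data and strictly monotone maps, for each `κ`. -/
noncomputable def AEquivSM (hn : 1 ≤ n) (hm : n - 1 ≤ m) (κ : ℕ) : A n m κ ≃ SM n κ :=
  Equiv.ofBijective (toSM n m κ) ⟨toSM_inj n m κ, toSM_surj n m hn hm κ⟩

lemma card_bound (κ : ℕ) (s : {s : Finset (Fin (n + κ)) // s.card = 2 * κ + 1}) : κ < n := by
  have h1 := Finset.card_le_univ s.1
  have h2 := s.2
  simp [Finset.card_univ] at h1
  omega

/-- Restrict the sigma type to `κ < n`. -/
def sigmaEquiv : (Σ κ : ℕ, {s : Finset (Fin (n + κ)) // s.card = 2 * κ + 1}) ≃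
    Σ κ : Fin n, {s : Finset (Fin (n + κ.1)) // s.card = 2 * κ.1 + 1} where
  toFun x := ⟨⟨x.1, card_bound n x.1 x.2⟩, x.2⟩
  invFun y := ⟨y.1.1, y.2⟩
  left_inv x := rfl
  right_inv y := rfl

lemma sum_choose_eq_fib (hn : 1 ≤ n) :
    ∑ κ ∈ Finset.range n, (n + κ).choose (2 * κ + 1) = Nat.fib (2 * n) := by
  symm
  have h1 : 2 * n = (2 * n - 1) + 1 := by omega
  calc Nat.fib (2 * n) = Nat.fib ((2 * n - 1) + 1) := by rw [← h1]
    _ = ∑ p ∈ Finset.HasAntidiagonal.antidiagonal (2 * n - 1), p.1.choose p.2 :=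
        Nat.fib_succ_eq_sum_choose _
    _ = ∑ k ∈ Finset.range ((2 * n - 1) + 1), k.choose (2 * n - 1 - k) :=
        Finset.Nat.sum_antidiagonal_eq_sum_range_succ_mk _ _
    _ = ∑ k ∈ Finset.Ico 0 ((2 * n - 1) + 1), k.choose (2 * n - 1 - k) := by
        rw [Finset.range_eq_Ico]
    _ = (∑ k ∈ Finset.Ico 0 n, k.choose (2 * n - 1 - k)) +
        ∑ k ∈ Finset.Ico n ((2 * n - 1) + 1), k.choose (2 * n - 1 - k) :=
        (Finset.sum_Ico_consecutive _ (by omega) (by omega)).symm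
    _ = ∑ k ∈ Finset.Ico n ((2 * n - 1) + 1), k.choose (2 * n - 1 - k) := by
        have hz : ∑ k ∈ Finset.Ico 0 n, k.choose (2 * n - 1 - k) = 0 := by
          apply Finset.sum_eq_zero
          intro k hk
          rw [Finset.mem_Ico] at hk
          exact Nat.choose_eq_zero_of_lt (by omega)
        rw [hz, zero_add]
    _ = ∑ i ∈ Finset.range ((2 * n - 1) + 1 - n), (n + i).choose (2 * n - 1 - (n + i)) :=
        Finset.sum_Ico_eq_sum_range _ _ _
    _ = ∑ κ ∈ Finset.range n, (n + κ).choose (2 * κ + 1) := by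
        have h2 : (2 * n - 1) + 1 - n = n := by omega
        rw [h2]
        refine Finset.sum_congr rfl fun κ hκ => ?_
        rw [Finset.mem_range] at hκ
        have e2 : 2 * n - 1 - (n + κ) = (n + κ) - (2 * κ + 1) := by omega
        rw [e2, Nat.choose_symm (by omega)]

end Stmt10Aux

/-- Count of charge-1 boundary bound states: the number of alternating chains
`(i_1, j_1, i_2, j_2, …, j_{k−1}, i_k)` of odd length `2k−1` (`k ≥ 1`), with
`i_t ∈ {0, …, n−1}`, `j_t ∈ {1, …, m}`, and `i_t < j_t ≤ i_{t+1}` for `1 ≤ t ≤ k−1`,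
equals the Fibonacci number `F(2n)` (with `F(1) = F(2) = 1`, i.e. `F = Nat.fib`).
Here a chain with `k` entries `i` and `k−1` entries `j` is encoded as a triple
`⟨κ, i, j⟩` with `κ = k − 1`, `i : Fin (κ+1) → ℕ` and `j : Fin κ → ℕ`. -/
theorem stmt10 (n m : ℕ) (hn : 1 ≤ n) (hm : n - 1 ≤ m) :
    Nat.card {p : (κ : ℕ) × (Fin (κ + 1) → ℕ) × (Fin κ → ℕ) //
      (∀ t, p.2.1 t < n) ∧ (∀ t, 1 ≤ p.2.2 t ∧ p.2.2 t ≤ m) ∧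
      (∀ t : Fin p.1, p.2.1 t.castSucc < p.2.2 t ∧ p.2.2 t ≤ p.2.1 t.succ)} =
    Nat.fib (2 * n) := by
  classical
  have e1 : {p : (κ : ℕ) × (Fin (κ + 1) → ℕ) × (Fin κ → ℕ) //
      (∀ t, p.2.1 t < n) ∧ (∀ t, 1 ≤ p.2.2 t ∧ p.2.2 t ≤ m) ∧
      (∀ t : Fin p.1, p.2.1 t.castSucc < p.2.2 t ∧ p.2.2 t ≤ p.2.1 t.succ)} ≃
      Σ κ : ℕ, Stmt10Aux.A n m κ :=
    { toFun := fun p => ⟨p.1.1, p.1.2, p.2⟩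
      invFun := fun x => ⟨⟨x.1, x.2.1⟩, x.2.2⟩
      left_inv := fun p => rfl
      right_inv := fun x => rfl }
  have e2 : (Σ κ : ℕ, Stmt10Aux.A n m κ) ≃
      Σ κ : ℕ, {s : Finset (Fin (n + κ)) // s.card = 2 * κ + 1} :=
    Equiv.sigmaCongrRight fun κ =>
      (Stmt10Aux.AEquivSM n m hn hm κ).trans (Stmt10Aux.smFinsetEquiv (2 * κ + 1) (n + κ))
  rw [Nat.card_congr ((e1.trans e2).trans (Stmt10Aux.sigmaEquiv n))]
  rw [Nat.card_eq_fintype_card, Fintype.card_sigma]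
  have : ∀ κ : Fin n, Fintype.card {s : Finset (Fin (n + κ.1)) // s.card = 2 * κ.1 + 1} =
      (n + κ.1).choose (2 * κ.1 + 1) := by
    intro κ
    rw [Fintype.card_finset_len, Fintype.card_fin]
  rw [Finset.sum_congr rfl (fun κ _ => this κ),
    Fin.sum_univ_eq_sum_range (fun k => (n + k).choose (2 * k + 1)) n]
  exact Stmt10Aux.sum_choose_eq_fib n hn
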